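/- Q' is a left ideal of the algebra #(C,A); for all q ∈ Q' and a ∈ A one has a_ψ q(x^ψ) ∈ B'; and for all a ∈ A and q, q' ∈ Q': (q # i(a)) # q' = q # i(a_ψ q'(x^ψ)). (These are the data and compatibility conditions of the Morita context (B', #(C,A), A, Q', τ', μ') with μ'(q ⊗ a) = q # i(a) and τ'(a ⊗ q) = a_ψ q(x^ψ).) -/

import Mathlib

open TensorProduct

noncomputable section

variable {k A C : Type*} [CommRing k] [Ring A] [Algebra k A]
  [AddCommGroup C] [Module k C] [Coalgebra k C]

/-- An entwining structure `(A, C, ψ)`. -/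
structure IsEntwining (k : Type*) {A C : Type*} [CommRing k] [Ring A] [Algebra k A]
    [AddCommGroup C] [Module k C] [Coalgebra k C]
    (ψ : C ⊗[k] A →ₗ[k] A ⊗[k] C) : Prop where
  mul_compat : ψ ∘ₗ LinearMap.lTensor C (LinearMap.mul' k A) =
    LinearMap.rTensor C (LinearMap.mul' k A) ∘ₗ (TensorProduct.assoc k A A C).symm.toLinearMap ∘ₗ
      LinearMap.lTensor A ψ ∘ₗ (TensorProduct.assoc k A C A).toLinearMap ∘ₗ
      LinearMap.rTensor A ψ ∘ₗ (TensorProduct.assoc k C A A).symm.toLinearMap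
  one_compat : ∀ c : C, ψ (c ⊗ₜ[k] 1) = 1 ⊗ₜ[k] c
  comul_compat : LinearMap.lTensor A Coalgebra.comul ∘ₗ ψ =
    (TensorProduct.assoc k A C C).toLinearMap ∘ₗ LinearMap.rTensor C ψ ∘ₗ
      (TensorProduct.assoc k C A C).symm.toLinearMap ∘ₗ LinearMap.lTensor C ψ ∘ₗ
      (TensorProduct.assoc k C C A).toLinearMap ∘ₗ LinearMap.rTensor A Coalgebra.comul
  counit_compat : ∀ (c : C) (a : A),
    TensorProduct.rid k A (LinearMap.lTensor A Coalgebra.counit (ψ (c ⊗ₜ[k] a))) =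
      (Coalgebra.counit (R := k) c) • a

/-- The smash product multiplication on `Hom_k(C,A)`: `(f # g)(c) = f(c₂)_ψ g((c₁)^ψ)`. -/
def smashMul (ψ : C ⊗[k] A →ₗ[k] A ⊗[k] C) (f g : C →ₗ[k] A) : C →ₗ[k] A :=
  LinearMap.mul' k A ∘ₗ LinearMap.lTensor A g ∘ₗ ψ ∘ₗ LinearMap.lTensor C f ∘ₗ Coalgebra.comul

/-- The unit of `#(C,A)`: `c ↦ ε(c) 1_A`. -/
def smashOne (k : Type*) (A C : Type*) [CommRing k] [Ring A] [Algebra k A]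
    [AddCommGroup C] [Module k C] [Coalgebra k C] : C →ₗ[k] A :=
  Algebra.linearMap k A ∘ₗ Coalgebra.counit

/-- The ring morphism `i : A → #(C,A)`, `i(a)(c) = ε(c) a`. -/
def smashIota (k : Type*) {A : Type*} (C : Type*) [CommRing k] [Ring A] [Algebra k A]
    [AddCommGroup C] [Module k C] [Coalgebra k C] (a : A) : C →ₗ[k] A :=
  (Coalgebra.counit : C →ₗ[k] k).smulRight a


/-- `q ∈ Q'` iff `q(c₂)_ψ ⊗ (c₁)^ψ = q(c) ⊗ x` for all `c`. -/
def QprimeCond (ψ : C ⊗[k] A →ₗ[k] A ⊗[k] C) (x : C) (q : C →ₗ[k] A) : Prop :=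
  ∀ c : C, ψ (LinearMap.lTensor C q (Coalgebra.comul c)) = q c ⊗ₜ[k] x

/-- `b ∈ B'` iff `b_ψ ⊗ x^ψ = b ⊗ x`. -/
def BprimeCond (ψ : C ⊗[k] A →ₗ[k] A ⊗[k] C) (x : C) (b : A) : Prop :=
  ψ (x ⊗ₜ[k] b) = b ⊗ₜ[k] x

/-- The connecting map `τ' : A ⊗ Q' → B'`, `τ'(a ⊗ q) = a_ψ q(x^ψ)`. -/
def tau' (ψ : C ⊗[k] A →ₗ[k] A ⊗[k] C) (x : C) (a : A) (q : C →ₗ[k] A) : A :=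
  LinearMap.mul' k A (LinearMap.lTensor A q (ψ (x ⊗ₜ[k] a)))

namespace EntwiningAux

variable (ψ : C ⊗[k] A →ₗ[k] A ⊗[k] C)

/-- `K((a ⊗ c) ⊗ b) = a_ψ' ⊗ ... `: the map `t ⊗ b ↦ (μ ⊗ C)(α⁻¹((A ⊗ ψ)(α (t ⊗ b))))`. -/
def Kmap : (A ⊗[k] C) ⊗[k] A →ₗ[k] A ⊗[k] C :=
  LinearMap.rTensor C (LinearMap.mul' k A) ∘ₗ (TensorProduct.assoc k A A C).symm.toLinearMap ∘ₗ
    LinearMap.lTensor A ψ ∘ₗ (TensorProduct.assoc k A C A).toLinearMap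

/-- `L(c ⊗ t) = α((ψ ⊗ C)(α⁻¹(c ⊗ t)))`. -/
def Lmap : C ⊗[k] (A ⊗[k] C) →ₗ[k] A ⊗[k] (C ⊗[k] C) :=
  (TensorProduct.assoc k A C C).toLinearMap ∘ₗ LinearMap.rTensor C ψ ∘ₗ
    (TensorProduct.assoc k C A C).symm.toLinearMap

lemma mul_assoc_symm (a : A) (t : A ⊗[k] C) :
    LinearMap.rTensor C (LinearMap.mul' k A) ((TensorProduct.assoc k A A C).symm (a ⊗ₜ[k] t)) =
      LinearMap.rTensor C (LinearMap.mulLeft k a) t := by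
  induction t using TensorProduct.induction_on with
  | zero => simp
  | tmul b c => simp [LinearMap.mul'_apply]
  | add s t hs ht => simp [tmul_add, hs, ht]

lemma Kmap_tmul (a : A) (c : C) (b : A) :
    Kmap ψ ((a ⊗ₜ[k] c) ⊗ₜ[k] b) =
      LinearMap.rTensor C (LinearMap.mulLeft k a) (ψ (c ⊗ₜ[k] b)) := by
  simp [Kmap, mul_assoc_symm]

variable {ψ}

lemma psi_mul (hψ : IsEntwining k ψ) (c : C) (a b : A) :
    ψ (c ⊗ₜ[k] (a * b)) = Kmap ψ (ψ (c ⊗ₜ[k] a) ⊗ₜ[k] b) := by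
  have h := LinearMap.congr_fun hψ.mul_compat (c ⊗ₜ[k] (a ⊗ₜ[k] b))
  simpa [Kmap, LinearMap.mul'_apply] using h

lemma psi_comul (hψ : IsEntwining k ψ) (c : C) (a : A) :
    LinearMap.lTensor A Coalgebra.comul (ψ (c ⊗ₜ[k] a)) =
      Lmap ψ (LinearMap.lTensor C ψ
        ((TensorProduct.assoc k C C A) ((Coalgebra.comul (R := k) c) ⊗ₜ[k] a))) := by
  have h := LinearMap.congr_fun hψ.comul_compat (c ⊗ₜ[k] a)
  simpa [Lmap] using h

lemma counit_psi (hψ : IsEntwining k ψ) (t : C ⊗[k] A) :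
    TensorProduct.rid k A (LinearMap.lTensor A Coalgebra.counit (ψ t)) =
      TensorProduct.lid k A (LinearMap.rTensor A (Coalgebra.counit (R := k)) t) := by
  induction t using TensorProduct.induction_on with
  | zero => simp
  | tmul c a => simpa using hψ.counit_compat c a
  | add s t hs ht => simp [hs, ht]

lemma psi_mul_lq (hψ : IsEntwining k ψ) (q : C →ₗ[k] A) (u : C) (t : A ⊗[k] C) :
    ψ (u ⊗ₜ[k] (LinearMap.mul' k A (LinearMap.lTensor A q t))) =
      Kmap ψ (LinearMap.lTensor (A ⊗[k] C) q
        ((TensorProduct.assoc k A C C).symm (Lmap ψ (u ⊗ₜ[k] t)))) := by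
  induction t using TensorProduct.induction_on with
  | zero => simp [tmul_zero]
  | tmul a c =>
    have h1 : Lmap ψ (u ⊗ₜ[k] (a ⊗ₜ[k] c)) =
        (TensorProduct.assoc k A C C) (ψ (u ⊗ₜ[k] a) ⊗ₜ[k] c) := by
      simp [Lmap]
    rw [h1, LinearEquiv.symm_apply_apply, LinearMap.lTensor_tmul]
    simpa [LinearMap.mul'_apply] using psi_mul hψ u a (q c)
  | add s t hs ht => simp only [tmul_add, map_add, hs, ht]

lemma kq_sub (hψ : IsEntwining k ψ) (q : C →ₗ[k] A) (a : A) (s : C ⊗[k] C) :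
    Kmap ψ (LinearMap.lTensor (A ⊗[k] C) q
        ((TensorProduct.assoc k A C C).symm (a ⊗ₜ[k] s))) =
      LinearMap.rTensor C (LinearMap.mulLeft k a) (ψ (LinearMap.lTensor C q s)) := by
  induction s using TensorProduct.induction_on with
  | zero => simp [tmul_zero]
  | tmul c₁ c₂ => simp [Kmap_tmul]
  | add s t hs ht => simp only [tmul_add, map_add, hs, ht]

lemma kq_comul (hψ : IsEntwining k ψ) {x : C} {q : C →ₗ[k] A} (hq : QprimeCond ψ x q)
    (t : A ⊗[k] C) :
    Kmap ψ (LinearMap.lTensor (A ⊗[k] C) q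
        ((TensorProduct.assoc k A C C).symm (LinearMap.lTensor A Coalgebra.comul t))) =
      (LinearMap.mul' k A (LinearMap.lTensor A q t)) ⊗ₜ[k] x := by
  induction t using TensorProduct.induction_on with
  | zero => simp [zero_tmul]
  | tmul a c =>
    rw [LinearMap.lTensor_tmul, kq_sub hψ, hq c]
    simp [LinearMap.mul'_apply]
  | add s t hs ht => simp only [map_add, hs, ht, add_tmul]

lemma mul_lTensor_iota (b : A) (s : A ⊗[k] C) :
    LinearMap.mul' k A (LinearMap.lTensor A (smashIota k C b) s) =
      (TensorProduct.rid k A (LinearMap.lTensor A (Coalgebra.counit (R := k)) s)) * b := by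
  induction s using TensorProduct.induction_on with
  | zero => simp
  | tmul a c =>
    simp [smashIota, LinearMap.mul'_apply, mul_smul_comm, smul_mul_assoc]
  | add s t hs ht => simp [hs, ht, add_mul]

lemma smash_iota_eq (hψ : IsEntwining k ψ) (g : C →ₗ[k] A) (b : A) :
    smashMul ψ g (smashIota k C b) = LinearMap.mulRight k b ∘ₗ g := by
  ext c
  have h1 : (smashMul ψ g (smashIota k C b)) c =
      LinearMap.mul' k A (LinearMap.lTensor A (smashIota k C b)
        (ψ (LinearMap.lTensor C g (Coalgebra.comul c)))) := rfl
  rw [h1, mul_lTensor_iota, counit_psi hψ]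
  have h2 : LinearMap.rTensor A (Coalgebra.counit (R := k))
      (LinearMap.lTensor C g (Coalgebra.comul c)) =
      LinearMap.lTensor k g (LinearMap.rTensor C (Coalgebra.counit (R := k))
        (Coalgebra.comul c)) := by
    rw [← LinearMap.comp_apply, LinearMap.rTensor_comp_lTensor,
      ← LinearMap.lTensor_comp_rTensor, LinearMap.comp_apply]
  rw [h2, Coalgebra.rTensor_counit_comul]
  simp

lemma mul_lq_mulRight (hψ : IsEntwining k ψ) (q' : C →ₗ[k] A) (a : A) (z : C ⊗[k] A) :
    LinearMap.mul' k A (LinearMap.lTensor A q'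
        (ψ (LinearMap.lTensor C (LinearMap.mulRight k a) z))) =
      LinearMap.mul' k A (LinearMap.lTensor A q' (Kmap ψ ((ψ z) ⊗ₜ[k] a))) := by
  induction z using TensorProduct.induction_on with
  | zero => simp [zero_tmul]
  | tmul c a' => rw [LinearMap.lTensor_tmul, LinearMap.mulRight_apply, psi_mul hψ]
  | add s t hs ht => simp only [map_add, hs, ht, add_tmul]

lemma mul_lq_mulLeft (q' : C →ₗ[k] A) (b : A) (t : A ⊗[k] C) :
    LinearMap.mul' k A (LinearMap.lTensor A q' (LinearMap.rTensor C (LinearMap.mulLeft k b) t)) =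
      b * LinearMap.mul' k A (LinearMap.lTensor A q' t) := by
  induction t using TensorProduct.induction_on with
  | zero => simp
  | tmul a c => simp [LinearMap.mul'_apply, mul_assoc]
  | add s t hs ht => simp [hs, ht, mul_add]

end EntwiningAux

open EntwiningAux in
/-- The data of the Morita context `(B', #(C,A), A, Q', τ', μ')`: `Q'` is a left ideal
of `#(C,A)`, `τ'` takes values in `B'`, and the Morita compatibility
`(q # i(a)) # q' = q # i(τ'(a ⊗ q'))` holds. -/
theorem Qprime_left_ideal_and_context (ψ : C ⊗[k] A →ₗ[k] A ⊗[k] C) (hψ : IsEntwining k ψ)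
    (x : C) (hx1 : Coalgebra.comul (R := k) x = x ⊗ₜ[k] x)
    (hx2 : Coalgebra.counit (R := k) x = (1 : k)) :
    -- Q' is an additive subgroup closed under k-scalars …
    QprimeCond ψ x (0 : C →ₗ[k] A) ∧
    (∀ q q' : C →ₗ[k] A, QprimeCond ψ x q → QprimeCond ψ x q' → QprimeCond ψ x (q + q')) ∧
    (∀ (r : k) (q : C →ₗ[k] A), QprimeCond ψ x q → QprimeCond ψ x (r • q)) ∧
    -- … and a left ideal of #(C,A)
    (∀ f q : C →ₗ[k] A, QprimeCond ψ x q → QprimeCond ψ x (smashMul ψ f q)) ∧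
    -- τ' takes values in B'
    (∀ (a : A) (q : C →ₗ[k] A), QprimeCond ψ x q → BprimeCond ψ x (tau' ψ x a q)) ∧
    -- Morita compatibility : (q # i(a)) # q' = q # i(a_ψ q'(x^ψ))
    (∀ (a : A) (q q' : C →ₗ[k] A), QprimeCond ψ x q → QprimeCond ψ x q' →
      smashMul ψ (smashMul ψ q (smashIota k C a)) q' =
        smashMul ψ q (smashIota k C (tau' ψ x a q'))) := by
  -- preliminary: `Lmap ψ (x ⊗ ψ(x ⊗ a)) = (A ⊗ Δ)(ψ(x ⊗ a))`
  have hLx : ∀ a : A, Lmap ψ (x ⊗ₜ[k] (ψ (x ⊗ₜ[k] a))) =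
      LinearMap.lTensor A Coalgebra.comul (ψ (x ⊗ₜ[k] a)) := by
    intro a
    rw [psi_comul hψ x a, hx1]
    simp
  refine ⟨?_, ?_, ?_, ?_, ?_, ?_⟩
  · intro c
    simp [QprimeCond, zero_tmul]
  · intro q q' hq hq' c
    simp only [QprimeCond, LinearMap.lTensor_add, LinearMap.add_apply, map_add,
      LinearMap.add_apply] at *
    rw [hq c, hq' c, add_tmul]
  · intro r q hq c
    simp only [QprimeCond, LinearMap.lTensor_smul, LinearMap.smul_apply, map_smul] at *
    rw [hq c, smul_tmul']
  · -- left ideal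
    intro f q hq c
    -- split `smashMul ψ f q = G' ∘ₗ comul`
    set G' : C ⊗[k] C →ₗ[k] A :=
      LinearMap.mul' k A ∘ₗ LinearMap.lTensor A q ∘ₗ ψ ∘ₗ LinearMap.lTensor C f with hG'
    have hsm : smashMul ψ f q = G' ∘ₗ Coalgebra.comul := rfl
    have step1 : LinearMap.lTensor C (smashMul ψ f q) (Coalgebra.comul c) =
        LinearMap.lTensor C G' ((TensorProduct.assoc k C C C)
          (LinearMap.rTensor C Coalgebra.comul (Coalgebra.comul c))) := by
      rw [hsm, LinearMap.lTensor_comp, LinearMap.comp_apply, Coalgebra.coassoc_apply]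
    rw [step1]
    set rr : Coalgebra.Repr k c (C × C) := Coalgebra.Repr.arbitrary k (A := C) c with hrr
    have heq := rr.eq
    let s := fun i : C × C => Coalgebra.Repr.arbitrary k (rr.left i)
    have expand : ψ (LinearMap.lTensor C G' ((TensorProduct.assoc k C C C)
        (LinearMap.rTensor C Coalgebra.comul (Coalgebra.comul c)))) =
        ∑ i ∈ rr.index, ∑ j ∈ (s i).index,
          ψ ((s i).left j ⊗ₜ[k] (LinearMap.mul' k A (LinearMap.lTensor A q
            (ψ ((s i).right j ⊗ₜ[k] f (rr.right i)))))) := by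
      rw [← heq]
      rw [map_sum]
      simp only [LinearMap.rTensor_tmul]
      have : ∀ i ∈ rr.index, (Coalgebra.comul (R := k) (rr.left i)) ⊗ₜ[k] (rr.right i) =
          ∑ j ∈ (s i).index, ((s i).left j ⊗ₜ[k] (s i).right j) ⊗ₜ[k] (rr.right i) := by
        intro i _
        rw [← (s i).eq, sum_tmul]
      rw [Finset.sum_congr rfl this, map_sum, map_sum, map_sum]
      refine Finset.sum_congr rfl fun i _ => ?_
      rw [map_sum, map_sum, map_sum]
      refine Finset.sum_congr rfl fun j _ => ?_
      simp [hG']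
    rw [expand]
    have step2 : ∀ i ∈ rr.index, ∑ j ∈ (s i).index,
        ψ ((s i).left j ⊗ₜ[k] (LinearMap.mul' k A (LinearMap.lTensor A q
          (ψ ((s i).right j ⊗ₜ[k] f (rr.right i)))))) =
        (LinearMap.mul' k A (LinearMap.lTensor A q (ψ (rr.left i ⊗ₜ[k] f (rr.right i))))) ⊗ₜ[k] x := by
      intro i _
      have hterm : ∀ j ∈ (s i).index,
          ψ ((s i).left j ⊗ₜ[k] (LinearMap.mul' k A (LinearMap.lTensor A q
            (ψ ((s i).right j ⊗ₜ[k] f (rr.right i)))))) =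
          Kmap ψ (LinearMap.lTensor (A ⊗[k] C) q ((TensorProduct.assoc k A C C).symm
            (Lmap ψ ((s i).left j ⊗ₜ[k] (ψ ((s i).right j ⊗ₜ[k] f (rr.right i))))))) := by
        intro j _
        exact psi_mul_lq hψ q _ _
      rw [Finset.sum_congr rfl hterm]
      have hsum : ∑ j ∈ (s i).index,
          Lmap ψ ((s i).left j ⊗ₜ[k] (ψ ((s i).right j ⊗ₜ[k] f (rr.right i)))) =
          LinearMap.lTensor A Coalgebra.comul (ψ (rr.left i ⊗ₜ[k] f (rr.right i))) := by
        rw [psi_comul hψ (rr.left i) (f (rr.right i)), ← (s i).eq]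
        rw [sum_tmul, map_sum, map_sum, map_sum]
        refine Finset.sum_congr rfl fun j _ => ?_
        simp
      calc ∑ j ∈ (s i).index,
            Kmap ψ (LinearMap.lTensor (A ⊗[k] C) q ((TensorProduct.assoc k A C C).symm
              (Lmap ψ ((s i).left j ⊗ₜ[k] (ψ ((s i).right j ⊗ₜ[k] f (rr.right i))))))) =
          Kmap ψ (LinearMap.lTensor (A ⊗[k] C) q ((TensorProduct.assoc k A C C).symm
            (∑ j ∈ (s i).index,
              Lmap ψ ((s i).left j ⊗ₜ[k] (ψ ((s i).right j ⊗ₜ[k] f (rr.right i))))))) := by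
            rw [map_sum, map_sum, map_sum]
        _ = (LinearMap.mul' k A (LinearMap.lTensor A q (ψ (rr.left i ⊗ₜ[k] f (rr.right i))))) ⊗ₜ[k] x := by
            rw [hsum, kq_comul hψ hq]
    rw [Finset.sum_congr rfl step2]
    have rhs : (smashMul ψ f q) c =
        ∑ i ∈ rr.index, LinearMap.mul' k A (LinearMap.lTensor A q (ψ (rr.left i ⊗ₜ[k] f (rr.right i)))) := by
      have h1 : (smashMul ψ f q) c = LinearMap.mul' k A (LinearMap.lTensor A q
          (ψ (LinearMap.lTensor C f (Coalgebra.comul c)))) := rfl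
      rw [h1, ← heq, map_sum, map_sum, map_sum, map_sum]
      rfl
    rw [rhs, sum_tmul]
  · -- τ' lands in B'
    intro a q hq
    unfold BprimeCond tau'
    rw [psi_mul_lq hψ q x (ψ (x ⊗ₜ[k] a)), hLx a, kq_comul hψ hq]
  · -- Morita compatibility
    intro a q q' hq hq'
    rw [smash_iota_eq hψ q a, smash_iota_eq hψ q (tau' ψ x a q')]
    ext c
    have lhs1 : (smashMul ψ (LinearMap.mulRight k a ∘ₗ q) q') c =
        LinearMap.mul' k A (LinearMap.lTensor A q'
          (ψ (LinearMap.lTensor C (LinearMap.mulRight k a)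
            (LinearMap.lTensor C q (Coalgebra.comul c))))) := by
      have : LinearMap.lTensor C (LinearMap.mulRight k a ∘ₗ q) =
          LinearMap.lTensor C (LinearMap.mulRight k a) ∘ₗ LinearMap.lTensor C q :=
        LinearMap.lTensor_comp C _ _
      simp only [smashMul, LinearMap.comp_apply, this]
    rw [lhs1, mul_lq_mulRight hψ q' a, hq c, Kmap_tmul, mul_lq_mulLeft]
    simp [tau']

end
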